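/- For the two-disk configuration (radius 1/2, distance 1), define φ(τ) near 0 by the functional equation φ(τ) = Δ(χ(τ), τ) + φ(χ(τ)) − 1, where Δ(σ,τ) = ‖Γ₁(σ) − Γ₂(τ)‖ with Γ₁(σ) = (1/2)(sin 2πσ, cos 2πσ), Γ₂(τ) = (0,2) + (1/2)(sin 2πτ, −cos 2πτ), and χ is C⁴ near 0 with χ(0) = 0, χ′(0) = 3 − 2√2 and φ′(χ(τ)) = −∂Δ/∂σ(χ(τ), τ). If φ is C⁴ near 0 with φ(0) = 1 and φ′(0) = 0, then φ″(0) = 2√2π², i.e., the second Taylor coefficient of φ at 0 is c₂ = √2π². -/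

import Mathlib

open Real Filter

noncomputable def Qf (σ τ : ℝ) : ℝ :=
  9/2 + 1/2 * Real.cos (2*π*(σ+τ)) - 2*Real.cos (2*π*σ) - 2*Real.cos (2*π*τ)

lemma qeq (σ τ : ℝ) :
    ((1/2) * Real.sin (2*π*σ) - (1/2) * Real.sin (2*π*τ))^2 +
      ((1/2) * Real.cos (2*π*σ) - (2 - (1/2) * Real.cos (2*π*τ)))^2 = Qf σ τ := by
  unfold Qf
  rw [show 2*π*(σ+τ) = 2*π*σ + 2*π*τ by ring, Real.cos_add]
  linear_combination (1/4) * Real.sin_sq_add_cos_sq (2*π*σ) + (1/4) * Real.sin_sq_add_cos_sq (2*π*τ)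

lemma Qge (σ τ : ℝ) : 1 ≤ Qf σ τ := by
  rw [← qeq]
  nlinarith [Real.cos_le_one (2*π*σ), Real.cos_le_one (2*π*τ),
    sq_nonneg ((1/2) * Real.sin (2*π*σ) - (1/2) * Real.sin (2*π*τ)),
    sq_nonneg ((1/2) * Real.cos (2*π*σ) - (2 - (1/2) * Real.cos (2*π*τ)) + 1)]

lemma sqrtQpos (σ τ : ℝ) : 0 < Real.sqrt (Qf σ τ) :=
  Real.sqrt_pos.2 (lt_of_lt_of_le one_pos (Qge σ τ))

lemma hQ1 (τ σ : ℝ) : HasDerivAt (fun s => Qf s τ)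
    (-π * Real.sin (2*π*(σ+τ)) + 4*π * Real.sin (2*π*σ)) σ := by
  have h1 : HasDerivAt (fun s : ℝ => 2*π*(s+τ)) (2*π) σ := by
    simpa using ((hasDerivAt_id σ).add_const τ).const_mul (2*π)
  have h2 : HasDerivAt (fun s : ℝ => 2*π*s) (2*π) σ := by
    simpa using (hasDerivAt_id σ).const_mul (2*π)
  have H := ((((h1.cos.const_mul (1/2:ℝ)).const_add (9/2:ℝ)).sub
    (h2.cos.const_mul (2:ℝ))).sub_const (2*Real.cos (2*π*τ)))
  unfold Qf
  exact H.congr_deriv (by ring)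

lemma hQ2 (c : ℝ → ℝ) (τ c' : ℝ) (hc : HasDerivAt c c' τ) :
    HasDerivAt (fun t => Qf (c t) t)
      (-π*(c'+1) * Real.sin (2*π*(c τ + τ)) + 4*π*c' * Real.sin (2*π*(c τ))
        + 4*π * Real.sin (2*π*τ)) τ := by
  have h1 : HasDerivAt (fun t : ℝ => 2*π*(c t + t)) (2*π*(c'+1)) τ :=
    (hc.add (hasDerivAt_id τ)).const_mul (2*π)
  have h2 : HasDerivAt (fun t : ℝ => 2*π*(c t)) (2*π*c') τ := hc.const_mul (2*π)
  have h3 : HasDerivAt (fun t : ℝ => 2*π*t) (2*π) τ := by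
    simpa using (hasDerivAt_id τ).const_mul (2*π)
  have H := (((h1.cos.const_mul (1/2:ℝ)).const_add (9/2:ℝ)).sub
    (h2.cos.const_mul (2:ℝ))).sub (h3.cos.const_mul (2:ℝ))
  unfold Qf
  exact H.congr_deriv (by ring)

theorem stmt_13 (Δ : ℝ → ℝ → ℝ)
    (hΔ : ∀ σ τ : ℝ, Δ σ τ =
      Real.sqrt (((1/2) * Real.sin (2*π*σ) - (1/2) * Real.sin (2*π*τ))^2 +
        ((1/2) * Real.cos (2*π*σ) - (2 - (1/2) * Real.cos (2*π*τ)))^2))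
    (χ φ : ℝ → ℝ)
    (hχ : ContDiffAt ℝ 4 χ 0) (hχ0 : χ 0 = 0)
    (hχ' : deriv χ 0 = 3 - 2 * Real.sqrt 2)
    (heq : ∀ᶠ τ in nhds (0:ℝ), φ τ = Δ (χ τ) τ + φ (χ τ) - 1)
    (hstat : ∀ᶠ τ in nhds (0:ℝ), deriv φ (χ τ) = -deriv (fun σ => Δ σ τ) (χ τ))
    (hφ : ContDiffAt ℝ 4 φ 0) (hφ0 : φ 0 = 1) (hφ' : deriv φ 0 = 0) :
    iteratedDeriv 2 φ 0 = 2 * Real.sqrt 2 * π^2 := by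
  have hΔQ : ∀ σ τ : ℝ, Δ σ τ = Real.sqrt (Qf σ τ) := fun σ τ => by rw [hΔ, qeq]
  have hχd : ∀ᶠ τ in nhds (0:ℝ), DifferentiableAt ℝ χ τ :=
    (hχ.eventually (by simp)).mono fun τ h => h.differentiableAt (by norm_num)
  have hφCD : ∀ᶠ x in nhds (0:ℝ), DifferentiableAt ℝ φ x :=
    (hφ.eventually (by simp)).mono fun x h => h.differentiableAt (by norm_num)
  have hχcont : Filter.Tendsto χ (nhds 0) (nhds 0) := by
    have := hχ.continuousAt.tendsto; rwa [hχ0] at this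
  have hφdχ : ∀ᶠ τ in nhds (0:ℝ), DifferentiableAt ℝ φ (χ τ) := hχcont.eventually hφCD
  set g : ℝ → ℝ := fun τ =>
    (-π * Real.sin (2*π*(χ τ + τ)) + 4*π * Real.sin (2*π*τ)) /
      (2 * Real.sqrt (Qf (χ τ) τ)) with hg_def
  have hkey : ∀ᶠ τ in nhds (0:ℝ), deriv φ τ = g τ := by
    filter_upwards [hχd, hφdχ, heq.eventually_nhds, hstat] with τ hχdτ hφdτ heqτ hstatτ
    have hQτpos : Qf (χ τ) τ ≠ 0 := ne_of_gt (lt_of_lt_of_le one_pos (Qge _ _))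
    have hSpos : 0 < Real.sqrt (Qf (χ τ) τ) := sqrtQpos _ _
    have hw := hQ2 χ τ (deriv χ τ) hχdτ.hasDerivAt
    have hs' := hw.sqrt hQτpos
    have hφχ : HasDerivAt (fun t => φ (χ t)) (deriv φ (χ τ) * deriv χ τ) τ :=
      hφdτ.hasDerivAt.comp τ hχdτ.hasDerivAt
    have hfun : (fun t => Δ (χ t) t + φ (χ t) - 1)
        = fun t => Real.sqrt (Qf (χ t) t) + φ (χ t) - 1 := funext fun t => by rw [hΔQ]
    have hT := (hs'.add hφχ).sub_const 1
    have hD1 : deriv (fun σ => Δ σ τ) (χ τ)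
        = (-π * Real.sin (2*π*(χ τ + τ)) + 4*π * Real.sin (2*π*(χ τ))) /
            (2 * Real.sqrt (Qf (χ τ) τ)) := by
      have hfun2 : (fun σ => Δ σ τ) = fun σ => Real.sqrt (Qf σ τ) := funext fun σ => by rw [hΔQ]
      rw [hfun2]
      exact ((hQ1 τ (χ τ)).sqrt hQτpos).deriv
    rw [Filter.EventuallyEq.deriv_eq heqτ, hfun, (show HasDerivAt (fun t => Real.sqrt (Qf (χ t) t) + φ (χ t) - 1) _ τ from hT).deriv, hstatτ, hD1, hg_def]
    field_simp
    ring
  have h2 : iteratedDeriv 2 φ 0 = deriv (deriv φ) 0 := by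
    rw [iteratedDeriv_succ, iteratedDeriv_one]
  rw [h2, Filter.EventuallyEq.deriv_eq hkey]
  have hχd0 : HasDerivAt χ (deriv χ 0) 0 := (hχ.differentiableAt (by norm_num)).hasDerivAt
  have hA : HasDerivAt (fun t : ℝ => 2*π*(χ t + t)) (2*π*(deriv χ 0 + 1)) 0 :=
    (hχd0.add (hasDerivAt_id 0)).const_mul (2*π)
  have h3 : HasDerivAt (fun t : ℝ => 2*π*t) (2*π) 0 := by
    simpa using (hasDerivAt_id (0:ℝ)).const_mul (2*π)
  have hN : HasDerivAt
      (fun t => -π * Real.sin (2*π*(χ t + t)) + 4*π * Real.sin (2*π*t))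
      (-π * (Real.cos (2*π*(χ 0 + 0)) * (2*π*(deriv χ 0 + 1)))
        + 4*π * (Real.cos (2*π*(0:ℝ)) * (2*π))) 0 :=
    (hA.sin.const_mul (-π)).add (h3.sin.const_mul (4*π))
  have hQ0 : Qf (χ 0) 0 ≠ 0 := ne_of_gt (lt_of_lt_of_le one_pos (Qge _ _))
  have hw0 := hQ2 χ 0 (deriv χ 0) hχd0
  have hD : HasDerivAt (fun t => 2 * Real.sqrt (Qf (χ t) t))
      (2 * ((-π*(deriv χ 0+1) * Real.sin (2*π*(χ 0 + 0)) + 4*π*(deriv χ 0) * Real.sin (2*π*(χ 0))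
          + 4*π * Real.sin (2*π*(0:ℝ))) / (2 * Real.sqrt (Qf (χ 0) 0)))) 0 :=
    (hw0.sqrt hQ0).const_mul 2
  have hDne : (2 : ℝ) * Real.sqrt (Qf (χ 0) 0) ≠ 0 := by
    have := sqrtQpos (χ 0) 0; positivity
  have hgd := (show HasDerivAt (fun τ => (-π * Real.sin (2*π*(χ τ + τ)) + 4*π * Real.sin (2*π*τ)) /
      (2 * Real.sqrt (Qf (χ τ) τ))) _ 0 from hN.div hD hDne).deriv
  have hQ00 : Qf (0:ℝ) 0 = 1 := by unfold Qf; norm_num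
  rw [hg_def, hgd, hχ0, hχ', hQ00]
  norm_num [Real.sqrt_one]
  ring
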